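/- Let n ≥ 3 and let f be a fixed-point-free involution on ZMod (2n) such that f a = b + 1 and f (a+1) = b, where a, a+1, b, b+1 are four pairwise distinct points. Let f' be the chord diagram on ZMod (2n−4) obtained by deleting the four points a, a+1, b, b+1 (and the two chords {a, b+1}, {a+1, b}) and relabelling the remaining 2n−4 points so as to preserve the cyclic order. Then every remaining chord has the same Gaussian parity in f' as the corresponding chord has in f. (This verifies parity axiom 4 for the Gaussian parity in the case of a second Reidemeister move: crossings not involved in the move keep their parity.) -/

import Mathlib

lemma mod_helper (N x y : ℕ) (hx : x < N) (hy : y < N) :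
    (x + N - y) % N = if y ≤ x then x - y else x + N - y := by
  split_ifs with h
  · have h2 : x + N - y = (x - y) + N := by omega
    rw [h2, Nat.add_mod_right, Nat.mod_eq_of_lt (by omega)]
  · exact Nat.mod_eq_of_lt (by omega)

lemma zsub_val {N : ℕ} [NeZero N] (c z1 z2 : ZMod N) :
    (z1 - z2).val = if (z2 - c).val ≤ (z1 - c).val then (z1 - c).val - (z2 - c).val
      else (z1 - c).val + N - (z2 - c).val := by
  have h1 : (z2 - c).val < N := ZMod.val_lt _
  have h2 : (z1 - c).val < N := ZMod.val_lt _
  have key : z1 - z2 = (((z1 - c).val + N - (z2 - c).val : ℕ) : ZMod N) := by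
    have hle : (z2 - c).val ≤ (z1 - c).val + N := by omega
    push_cast [hle]
    simp only [ZMod.natCast_val, ZMod.cast_id, ZMod.natCast_self, CharP.cast_eq_zero]
    ring
  rw [key, ZMod.val_natCast, mod_helper N _ _ h2 h1]

lemma zadd_one_val {N : ℕ} [NeZero N] (z : ZMod N) :
    (z + 1).val = if z.val + 1 = N then 0 else z.val + 1 := by
  have h1 : z.val < N := ZMod.val_lt _
  have key : z + 1 = ((z.val + 1 : ℕ) : ZMod N) := by
    push_cast
    simp [ZMod.natCast_val, ZMod.cast_id]
  rw [key, ZMod.val_natCast]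
  split_ifs with h
  · simp [h]
  · exact Nat.mod_eq_of_lt (by omega)

lemma zval_sub_eq_zero_iff {N : ℕ} [NeZero N] (z1 z2 : ZMod N) :
    (z1 - z2).val = 0 ↔ z1 = z2 := by
  rw [ZMod.val_eq_zero, sub_eq_zero]

lemma zval_sub_inj {N : ℕ} [NeZero N] (u z1 z2 : ZMod N) (h : (z1 - u).val = (z2 - u).val) :
    z1 = z2 := by
  have h2 : z1 - u = z2 - u := ZMod.val_injective N h
  exact sub_left_inj.mp h2

lemma chiRel (N pu pw pd : ℕ) (hu : pu < N) (hw : pw < N) (hd : pd < N)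
    (h2 : pd ≠ pu) (h3 : pd ≠ pw) (h4 : pu ≠ pw) :
    (if 0 < (if pu ≤ pd then pd - pu else pd + N - pu) ∧
        (if pu ≤ pd then pd - pu else pd + N - pu) ≤ (if pu ≤ pw then pw - pu else pw + N - pu)
      then 1 else 0) + (if pd < pu then 1 else 0)
    = (if pd < pw then 1 else 0) + (if pw < pu then 1 else 0) := by
  split_ifs <;> omega

lemma Kcount1 (A1 A2 A3 A4 R : ℕ)
    (d12 : A1 ≠ A2) (d13 : A1 ≠ A3) (d14 : A1 ≠ A4) (d23 : A2 ≠ A3) (d24 : A2 ≠ A4) (d34 : A3 ≠ A4)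
    (r1 : A1 ≠ R) (r2 : A2 ≠ R) (r3 : A3 ≠ R) (r4 : A4 ≠ R) (hR : 0 < R) :
    (if 0 < A1 ∧ A1 ≤ R then 1 else 0) + (if 0 < A2 ∧ A2 ≤ R then 1 else 0) +
    (if 0 < A3 ∧ A3 ≤ R then 1 else 0) + (if 0 < A4 ∧ A4 ≤ R then 1 else 0) < R := by
  split_ifs <;> omega

lemma Kcount2 (A1 A2 A3 A4 L R : ℕ)
    (d12 : A1 ≠ A2) (d13 : A1 ≠ A3) (d14 : A1 ≠ A4) (d23 : A2 ≠ A3) (d24 : A2 ≠ A4) (d34 : A3 ≠ A4)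
    (r1 : A1 ≠ R) (r2 : A2 ≠ R) (r3 : A3 ≠ R) (r4 : A4 ≠ R) (hLR : L < R) :
    (if 0 < A1 ∧ A1 ≤ R then 1 else 0) + (if 0 < A2 ∧ A2 ≤ R then 1 else 0) +
    (if 0 < A3 ∧ A3 ≤ R then 1 else 0) + (if 0 < A4 ∧ A4 ≤ R then 1 else 0) + L
    < R + ((if 0 < A1 ∧ A1 ≤ L then 1 else 0) + (if 0 < A2 ∧ A2 ≤ L then 1 else 0) +
    (if 0 < A3 ∧ A3 ≤ L then 1 else 0) + (if 0 < A4 ∧ A4 ≤ L then 1 else 0)) := by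
  split_ifs <;> omega

lemma Kcount3 (A1 A2 A3 A4 R N : ℕ)
    (d12 : A1 ≠ A2) (d13 : A1 ≠ A3) (d14 : A1 ≠ A4) (d23 : A2 ≠ A3) (d24 : A2 ≠ A4) (d34 : A3 ≠ A4)
    (r1 : A1 ≠ R) (r2 : A2 ≠ R) (r3 : A3 ≠ R) (r4 : A4 ≠ R)
    (p1 : 0 < A1) (p2 : 0 < A2) (p3 : 0 < A3) (p4 : 0 < A4)
    (l1 : A1 < N) (l2 : A2 < N) (l3 : A3 < N) (l4 : A4 < N) (hR : R < N) :
    R + 4 ≤ (if 0 < A1 ∧ A1 ≤ R then 1 else 0) + (if 0 < A2 ∧ A2 ≤ R then 1 else 0) +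
    (if 0 < A3 ∧ A3 ≤ R then 1 else 0) + (if 0 < A4 ∧ A4 ≤ R then 1 else 0) + N - 1 := by
  split_ifs <;> omega

lemma sbound (p1 p2 p3 p4 q : ℕ)
    (d12 : p1 ≠ p2) (d13 : p1 ≠ p3) (d14 : p1 ≠ p4) (d23 : p2 ≠ p3) (d24 : p2 ≠ p4) (d34 : p3 ≠ p4) :
    (if p1 < q then 1 else 0) + (if p2 < q then 1 else 0) +
    (if p3 < q then 1 else 0) + (if p4 < q then 1 else 0) ≤ q := by
  split_ifs <;> omega

lemma rbound (p1 p2 p3 p4 q N : ℕ)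
    (d12 : p1 ≠ p2) (d13 : p1 ≠ p3) (d14 : p1 ≠ p4) (d23 : p2 ≠ p3) (d24 : p2 ≠ p4) (d34 : p3 ≠ p4)
    (r1 : p1 ≠ q) (r2 : p2 ≠ q) (r3 : p3 ≠ q) (r4 : p4 ≠ q)
    (l1 : p1 < N) (l2 : p2 < N) (l3 : p3 < N) (l4 : p4 < N) (hq : q < N) :
    q + 4 ≤ (if p1 < q then 1 else 0) + (if p2 < q then 1 else 0) +
    (if p3 < q then 1 else 0) + (if p4 < q then 1 else 0) + N - 1 := by
  split_ifs <;> omega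



/-- The open arc from `u` to `v` on the cyclic set `ZMod N`: the points
`u+1, u+2, …, v-1` reached from `u` by repeatedly adding `1` before reaching `v`. -/
def openArc {N : ℕ} (u v : ZMod N) : Set (ZMod N) :=
  {w | 0 < (w - u).val ∧ (w - u).val < (v - u).val}

/-- For a chord diagram given by the fixed-point-free involution `f`, the chord
`{b, f b}` is linked with the chord `{a, f a}` if exactly one of `b`, `f b`
lies in the open arc from `a` to `f a`. -/
def Linked {N : ℕ} (f : ZMod N → ZMod N) (a b : ZMod N) : Prop :=
  Xor' (b ∈ openArc a (f a)) (f b ∈ openArc a (f a))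

/-- The number of chords of the chord diagram `f` linked with the chord `{a, f a}`. -/
noncomputable def linkedCount {N : ℕ} (f : ZMod N → ZMod N) (a : ZMod N) : ℕ :=
  Set.ncard {d : Set (ZMod N) | ∃ b, d = {b, f b} ∧ Linked f a b}

/-- The chord `{a, f a}` is Gaussian-even: the number of chords linked with it is even. -/
def GaussEven {N : ℕ} (f : ZMod N → ZMod N) (a : ZMod N) : Prop :=
  Even (linkedCount f a)

set_option maxHeartbeats 1000000 in
/-- Decreasing second Reidemeister move: deleting two parallel chords
`{a, b+1}`, `{a+1, b}` together with their four endpoints and relabelling the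
remaining `2n - 4` points so as to preserve the cyclic order (the point `x` gets
the new label `(x - (a+2)).val` minus the number of deleted points preceding `x`
in the order starting at `a+2`) does not change the Gaussian parity of any of the
remaining chords. -/
theorem second_reidemeister_preserves_other_parities (n : ℕ) (hn : 3 ≤ n)
    (f : ZMod (2 * n) → ZMod (2 * n))
    (hinv : Function.Involutive f) (hfpf : ∀ x, f x ≠ x)
    (a b : ZMod (2 * n)) (h1 : f a = b + 1) (h2 : f (a + 1) = b)
    (hdist : [a, a + 1, b, b + 1].Pairwise (· ≠ ·))
    (φ : ZMod (2 * n) → ZMod (2 * n - 4))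
    (hφ : ∀ x, φ x = (((x - (a + 2)).val -
        Set.ncard {d : ZMod (2 * n) | d ∈ ({a, a + 1, b, b + 1} : Set (ZMod (2 * n))) ∧
          (d - (a + 2)).val < (x - (a + 2)).val} : ℕ) : ZMod (2 * n - 4)))
    (f' : ZMod (2 * n - 4) → ZMod (2 * n - 4))
    (hf' : ∀ x, x ∉ ({a, a + 1, b, b + 1} : Set (ZMod (2 * n))) → f' (φ x) = φ (f x)) :
    ∀ x, x ∉ ({a, a + 1, b, b + 1} : Set (ZMod (2 * n))) →
      (GaussEven f' (φ x) ↔ GaussEven f x) := by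
  haveI hNZ : NeZero (2 * n) := ⟨by omega⟩
  haveI hMZ : NeZero (2 * n - 4) := ⟨by omega⟩
  have hNM : 2 * n = (2 * n - 4) + 4 := by omega
  have hn6 : 6 ≤ 2 * n := by omega
  -- distinctness facts
  simp only [List.pairwise_cons, List.mem_cons, List.mem_singleton, List.not_mem_nil] at hdist
  obtain ⟨q1, q2, q3, -, -⟩ := hdist
  have dab1 : a ≠ a + 1 := q1 _ (Or.inl rfl)
  have dab : a ≠ b := q1 _ (Or.inr (Or.inl rfl))
  have dabb1 : a ≠ b + 1 := q1 _ (Or.inr (Or.inr (Or.inl rfl)))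
  have da1b : a + 1 ≠ b := q2 _ (Or.inl rfl)
  have da1b1 : a + 1 ≠ b + 1 := q2 _ (Or.inr (Or.inl rfl))
  have dbb1 : b ≠ b + 1 := q3 _ (Or.inl rfl)
  -- chord structure
  have hfb : f b = a + 1 := by rw [← h2, hinv]
  have hfb1 : f (b + 1) = a := by rw [← h1, hinv]
  have hnm : ∀ z : ZMod (2 * n), z ∉ ({a, a + 1, b, b + 1} : Set (ZMod (2 * n))) →
      z ≠ a ∧ z ≠ a + 1 ∧ z ≠ b ∧ z ≠ b + 1 := by
    intro z hz
    simp only [Set.mem_insert_iff, Set.mem_singleton_iff, not_or] at hz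
    exact hz
  have hfS : ∀ z : ZMod (2 * n), z ∉ ({a, a + 1, b, b + 1} : Set (ZMod (2 * n))) → f z ∉ ({a, a + 1, b, b + 1} : Set (ZMod (2 * n))) := by
    intro z hz hmem
    obtain ⟨e1, e2, e3, e4⟩ := hnm z hz
    simp only [Set.mem_insert_iff, Set.mem_singleton_iff] at hmem
    rcases hmem with h | h | h | h
    · have h' := congrArg f h
      rw [hinv z, h1] at h'
      exact e4 h'
    · have h' := congrArg f h
      rw [hinv z, h2] at h'
      exact e3 h'
    · have h' := congrArg f h
      rw [hinv z, hfb] at h'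
      exact e2 h'
    · have h' := congrArg f h
      rw [hinv z, hfb1] at h'
      exact e1 h'
  -- val basics
  have hvlt : ∀ z : ZMod (2 * n), z.val < 2 * n := fun z => ZMod.val_lt z
  have vdist : ∀ u' z1 z2 : ZMod (2 * n), z1 ≠ z2 → (z1 - u').val ≠ (z2 - u').val :=
    fun u' z1 z2 h h' => h (zval_sub_inj u' z1 z2 h')
  have hvpos : ∀ z1 z2 : ZMod (2 * n), z1 ≠ z2 → 0 < (z1 - z2).val := by
    intro z1 z2 h
    exact Nat.pos_of_ne_zero (fun h0 => h ((zval_sub_eq_zero_iff z1 z2).mp h0))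
  -- the ncard-to-sum bridge
  have hbridge : ∀ z : ZMod (2 * n),
      Set.ncard {d : ZMod (2 * n) | d ∈ ({a, a + 1, b, b + 1} : Set (ZMod (2 * n))) ∧ (d - (a + 2)).val < (z - (a + 2)).val}
      = ((if (a - (a + 2)).val < (z - (a + 2)).val then 1 else 0) + (if (a + 1 - (a + 2)).val < (z - (a + 2)).val then 1 else 0) + (if (b - (a + 2)).val < (z - (a + 2)).val then 1 else 0) + (if (b + 1 - (a + 2)).val < (z - (a + 2)).val then 1 else 0)) := by
    intro z
    have hset : {d : ZMod (2 * n) | d ∈ ({a, a + 1, b, b + 1} : Set (ZMod (2 * n))) ∧ (d - (a + 2)).val < (z - (a + 2)).val}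
        = ↑(({a, a + 1, b, b + 1} : Finset (ZMod (2 * n))).filter
            (fun d => (d - (a + 2)).val < (z - (a + 2)).val)) := by
      ext d
      simp [Finset.mem_filter, Set.mem_setOf_eq]
    rw [hset, Set.ncard_coe_finset, Finset.card_filter]
    rw [show ({a, a + 1, b, b + 1} : Finset (ZMod (2 * n)))
        = insert a (insert (a + 1) (insert b {b + 1})) from rfl]
    rw [Finset.sum_insert (by simp [dab1, dab, dabb1]),
        Finset.sum_insert (by simp [da1b, da1b1]),
        Finset.sum_insert (by simp [dbb1]), Finset.sum_singleton]
    ring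
  have hsum : ∀ z : ZMod (2 * n), φ z = (((z - (a + 2)).val -
      ((if (a - (a + 2)).val < (z - (a + 2)).val then 1 else 0) + (if (a + 1 - (a + 2)).val < (z - (a + 2)).val then 1 else 0) + (if (b - (a + 2)).val < (z - (a + 2)).val then 1 else 0) + (if (b + 1 - (a + 2)).val < (z - (a + 2)).val then 1 else 0)) : ℕ) : ZMod (2 * n - 4)) := by
    intro z
    rw [hφ z, hbridge z]
  -- key lemma A
  have keyA : ∀ u w : ZMod (2 * n), u ∉ ({a, a + 1, b, b + 1} : Set (ZMod (2 * n))) → w ∉ ({a, a + 1, b, b + 1} : Set (ZMod (2 * n))) → u ≠ w →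
      (φ w - φ u).val + ((if 0 < (a - u).val ∧ (a - u).val ≤ (w - u).val then 1 else 0) + (if 0 < (a + 1 - u).val ∧ (a + 1 - u).val ≤ (w - u).val then 1 else 0) + (if 0 < (b - u).val ∧ (b - u).val ≤ (w - u).val then 1 else 0) + (if 0 < (b + 1 - u).val ∧ (b + 1 - u).val ≤ (w - u).val then 1 else 0)) = (w - u).val
      ∧ 0 < (φ w - φ u).val := by
    intro u w hu hw huw
    obtain ⟨hua, hua1, hub, hub1⟩ := hnm u hu
    obtain ⟨hwa, hwa1, hwb, hwb1⟩ := hnm w hw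
    have dpapa1 : (a - (a + 2)).val ≠ (a + 1 - (a + 2)).val := vdist _ _ _ dab1
    have dpapb : (a - (a + 2)).val ≠ (b - (a + 2)).val := vdist _ _ _ dab
    have dpapb1 : (a - (a + 2)).val ≠ (b + 1 - (a + 2)).val := vdist _ _ _ dabb1
    have dpa1pb : (a + 1 - (a + 2)).val ≠ (b - (a + 2)).val := vdist _ _ _ da1b
    have dpa1pb1 : (a + 1 - (a + 2)).val ≠ (b + 1 - (a + 2)).val := vdist _ _ _ da1b1
    have dpbpb1 : (b - (a + 2)).val ≠ (b + 1 - (a + 2)).val := vdist _ _ _ dbb1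
    have dpapu : (a - (a + 2)).val ≠ (u - (a + 2)).val := vdist _ _ _ (Ne.symm hua)
    have dpa1pu : (a + 1 - (a + 2)).val ≠ (u - (a + 2)).val := vdist _ _ _ (Ne.symm hua1)
    have dpbpu : (b - (a + 2)).val ≠ (u - (a + 2)).val := vdist _ _ _ (Ne.symm hub)
    have dpb1pu : (b + 1 - (a + 2)).val ≠ (u - (a + 2)).val := vdist _ _ _ (Ne.symm hub1)
    have dpapw : (a - (a + 2)).val ≠ (w - (a + 2)).val := vdist _ _ _ (Ne.symm hwa)
    have dpa1pw : (a + 1 - (a + 2)).val ≠ (w - (a + 2)).val := vdist _ _ _ (Ne.symm hwa1)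
    have dpbpw : (b - (a + 2)).val ≠ (w - (a + 2)).val := vdist _ _ _ (Ne.symm hwb)
    have dpb1pw : (b + 1 - (a + 2)).val ≠ (w - (a + 2)).val := vdist _ _ _ (Ne.symm hwb1)
    have dpupw : (u - (a + 2)).val ≠ (w - (a + 2)).val := vdist _ _ _ huw
    have ea : (if 0 < (a - u).val ∧ (a - u).val ≤ (w - u).val then 1 else 0) + (if (a - (a + 2)).val < (u - (a + 2)).val then 1 else 0)
        = (if (a - (a + 2)).val < (w - (a + 2)).val then 1 else 0) + (if (w - (a + 2)).val < (u - (a + 2)).val then 1 else 0) := by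
      rw [zsub_val (a + 2) a u, zsub_val (a + 2) w u]
      exact chiRel (2 * n) _ _ _ (ZMod.val_lt _) (ZMod.val_lt _) (ZMod.val_lt _) dpapu dpapw dpupw
    have ea1 : (if 0 < (a + 1 - u).val ∧ (a + 1 - u).val ≤ (w - u).val then 1 else 0) + (if (a + 1 - (a + 2)).val < (u - (a + 2)).val then 1 else 0)
        = (if (a + 1 - (a + 2)).val < (w - (a + 2)).val then 1 else 0) + (if (w - (a + 2)).val < (u - (a + 2)).val then 1 else 0) := by
      rw [zsub_val (a + 2) (a + 1) u, zsub_val (a + 2) w u]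
      exact chiRel (2 * n) _ _ _ (ZMod.val_lt _) (ZMod.val_lt _) (ZMod.val_lt _) dpa1pu dpa1pw dpupw
    have eb : (if 0 < (b - u).val ∧ (b - u).val ≤ (w - u).val then 1 else 0) + (if (b - (a + 2)).val < (u - (a + 2)).val then 1 else 0)
        = (if (b - (a + 2)).val < (w - (a + 2)).val then 1 else 0) + (if (w - (a + 2)).val < (u - (a + 2)).val then 1 else 0) := by
      rw [zsub_val (a + 2) b u, zsub_val (a + 2) w u]
      exact chiRel (2 * n) _ _ _ (ZMod.val_lt _) (ZMod.val_lt _) (ZMod.val_lt _) dpbpu dpbpw dpupw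
    have eb1 : (if 0 < (b + 1 - u).val ∧ (b + 1 - u).val ≤ (w - u).val then 1 else 0) + (if (b + 1 - (a + 2)).val < (u - (a + 2)).val then 1 else 0)
        = (if (b + 1 - (a + 2)).val < (w - (a + 2)).val then 1 else 0) + (if (w - (a + 2)).val < (u - (a + 2)).val then 1 else 0) := by
      rw [zsub_val (a + 2) (b + 1) u, zsub_val (a + 2) w u]
      exact chiRel (2 * n) _ _ _ (ZMod.val_lt _) (ZMod.val_lt _) (ZMod.val_lt _) dpb1pu dpb1pw dpupw
    have K1 := Kcount1 (a - u).val (a + 1 - u).val (b - u).val (b + 1 - u).val (w - u).val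
      (vdist _ _ _ dab1) (vdist _ _ _ dab) (vdist _ _ _ dabb1) (vdist _ _ _ da1b)
      (vdist _ _ _ da1b1) (vdist _ _ _ dbb1)
      (vdist _ _ _ (Ne.symm hwa)) (vdist _ _ _ (Ne.symm hwa1)) (vdist _ _ _ (Ne.symm hwb))
      (vdist _ _ _ (Ne.symm hwb1)) (hvpos _ _ (Ne.symm huw))
    have K3 := Kcount3 (a - u).val (a + 1 - u).val (b - u).val (b + 1 - u).val (w - u).val (2 * n)
      (vdist _ _ _ dab1) (vdist _ _ _ dab) (vdist _ _ _ dabb1) (vdist _ _ _ da1b)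
      (vdist _ _ _ da1b1) (vdist _ _ _ dbb1)
      (vdist _ _ _ (Ne.symm hwa)) (vdist _ _ _ (Ne.symm hwa1)) (vdist _ _ _ (Ne.symm hwb))
      (vdist _ _ _ (Ne.symm hwb1))
      (hvpos _ _ (Ne.symm hua)) (hvpos _ _ (Ne.symm hua1)) (hvpos _ _ (Ne.symm hub))
      (hvpos _ _ (Ne.symm hub1))
      (ZMod.val_lt _) (ZMod.val_lt _) (ZMod.val_lt _) (ZMod.val_lt _) (ZMod.val_lt _)
    have sbu := sbound (a - (a + 2)).val (a + 1 - (a + 2)).val (b - (a + 2)).val (b + 1 - (a + 2)).val (u - (a + 2)).val dpapa1 dpapb dpapb1 dpa1pb dpa1pb1 dpbpb1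
    have sbw := sbound (a - (a + 2)).val (a + 1 - (a + 2)).val (b - (a + 2)).val (b + 1 - (a + 2)).val (w - (a + 2)).val dpapa1 dpapb dpapb1 dpa1pb dpa1pb1 dpbpb1
    have rbu := rbound (a - (a + 2)).val (a + 1 - (a + 2)).val (b - (a + 2)).val (b + 1 - (a + 2)).val (u - (a + 2)).val (2 * n) dpapa1 dpapb dpapb1 dpa1pb dpa1pb1 dpbpb1
      dpapu dpa1pu dpbpu dpb1pu (ZMod.val_lt _) (ZMod.val_lt _) (ZMod.val_lt _) (ZMod.val_lt _) (ZMod.val_lt _)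
    have rbw := rbound (a - (a + 2)).val (a + 1 - (a + 2)).val (b - (a + 2)).val (b + 1 - (a + 2)).val (w - (a + 2)).val (2 * n) dpapa1 dpapb dpapb1 dpa1pb dpa1pb1 dpbpb1
      dpapw dpa1pw dpbpw dpb1pw (ZMod.val_lt _) (ZMod.val_lt _) (ZMod.val_lt _) (ZMod.val_lt _) (ZMod.val_lt _)
    have hVW : ((u - (a + 2)).val ≤ (w - (a + 2)).val ∧ (w - u).val = (w - (a + 2)).val - (u - (a + 2)).val)
        ∨ ((w - (a + 2)).val < (u - (a + 2)).val ∧ (w - u).val = (w - (a + 2)).val + 2 * n - (u - (a + 2)).val) := by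
      rw [zsub_val (a + 2) w u]
      rcases le_or_gt (u - (a + 2)).val (w - (a + 2)).val with h | h
      · exact Or.inl ⟨h, if_pos h⟩
      · exact Or.inr ⟨h, if_neg (not_le.mpr h)⟩
    have hWc : ((w - (a + 2)).val < (u - (a + 2)).val ∧ (if (w - (a + 2)).val < (u - (a + 2)).val then (1:ℕ) else 0) = 1)
        ∨ ((u - (a + 2)).val ≤ (w - (a + 2)).val ∧ (if (w - (a + 2)).val < (u - (a + 2)).val then (1:ℕ) else 0) = 0) := by
      rcases lt_or_ge (w - (a + 2)).val (u - (a + 2)).val with h | h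
      · exact Or.inl ⟨h, if_pos h⟩
      · exact Or.inr ⟨h, if_neg (not_lt.mpr h)⟩
    have hrult : (u - (a + 2)).val - ((if (a - (a + 2)).val < (u - (a + 2)).val then 1 else 0) + (if (a + 1 - (a + 2)).val < (u - (a + 2)).val then 1 else 0) + (if (b - (a + 2)).val < (u - (a + 2)).val then 1 else 0) + (if (b + 1 - (a + 2)).val < (u - (a + 2)).val then 1 else 0)) < 2 * n - 4 := by omega
    have hrwlt : (w - (a + 2)).val - ((if (a - (a + 2)).val < (w - (a + 2)).val then 1 else 0) + (if (a + 1 - (a + 2)).val < (w - (a + 2)).val then 1 else 0) + (if (b - (a + 2)).val < (w - (a + 2)).val then 1 else 0) + (if (b + 1 - (a + 2)).val < (w - (a + 2)).val then 1 else 0)) < 2 * n - 4 := by omega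
    have hcast : φ w - φ u = (((((w - (a + 2)).val - ((if (a - (a + 2)).val < (w - (a + 2)).val then 1 else 0) + (if (a + 1 - (a + 2)).val < (w - (a + 2)).val then 1 else 0) + (if (b - (a + 2)).val < (w - (a + 2)).val then 1 else 0) + (if (b + 1 - (a + 2)).val < (w - (a + 2)).val then 1 else 0))) + (2 * n - 4) - ((u - (a + 2)).val - ((if (a - (a + 2)).val < (u - (a + 2)).val then 1 else 0) + (if (a + 1 - (a + 2)).val < (u - (a + 2)).val then 1 else 0) + (if (b - (a + 2)).val < (u - (a + 2)).val then 1 else 0) + (if (b + 1 - (a + 2)).val < (u - (a + 2)).val then 1 else 0)))) : ℕ) : ZMod (2 * n - 4)) := by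
      rw [hsum u, hsum w]
      have h9 : ((w - (a + 2)).val - ((if (a - (a + 2)).val < (w - (a + 2)).val then 1 else 0) + (if (a + 1 - (a + 2)).val < (w - (a + 2)).val then 1 else 0) + (if (b - (a + 2)).val < (w - (a + 2)).val then 1 else 0) + (if (b + 1 - (a + 2)).val < (w - (a + 2)).val then 1 else 0))) + (2 * n - 4) - ((u - (a + 2)).val - ((if (a - (a + 2)).val < (u - (a + 2)).val then 1 else 0) + (if (a + 1 - (a + 2)).val < (u - (a + 2)).val then 1 else 0) + (if (b - (a + 2)).val < (u - (a + 2)).val then 1 else 0) + (if (b + 1 - (a + 2)).val < (u - (a + 2)).val then 1 else 0)))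
          = ((w - (a + 2)).val - ((if (a - (a + 2)).val < (w - (a + 2)).val then 1 else 0) + (if (a + 1 - (a + 2)).val < (w - (a + 2)).val then 1 else 0) + (if (b - (a + 2)).val < (w - (a + 2)).val then 1 else 0) + (if (b + 1 - (a + 2)).val < (w - (a + 2)).val then 1 else 0))) + ((2 * n - 4) - ((u - (a + 2)).val - ((if (a - (a + 2)).val < (u - (a + 2)).val then 1 else 0) + (if (a + 1 - (a + 2)).val < (u - (a + 2)).val then 1 else 0) + (if (b - (a + 2)).val < (u - (a + 2)).val then 1 else 0) + (if (b + 1 - (a + 2)).val < (u - (a + 2)).val then 1 else 0)))) := by omega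
      rw [h9, Nat.cast_add, Nat.cast_sub (le_of_lt hrult)]
      simp only [ZMod.natCast_self]
      ring
    have hval' : (φ w - φ u).val = if ((u - (a + 2)).val - ((if (a - (a + 2)).val < (u - (a + 2)).val then 1 else 0) + (if (a + 1 - (a + 2)).val < (u - (a + 2)).val then 1 else 0) + (if (b - (a + 2)).val < (u - (a + 2)).val then 1 else 0) + (if (b + 1 - (a + 2)).val < (u - (a + 2)).val then 1 else 0))) ≤ ((w - (a + 2)).val - ((if (a - (a + 2)).val < (w - (a + 2)).val then 1 else 0) + (if (a + 1 - (a + 2)).val < (w - (a + 2)).val then 1 else 0) + (if (b - (a + 2)).val < (w - (a + 2)).val then 1 else 0) + (if (b + 1 - (a + 2)).val < (w - (a + 2)).val then 1 else 0)))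
        then ((w - (a + 2)).val - ((if (a - (a + 2)).val < (w - (a + 2)).val then 1 else 0) + (if (a + 1 - (a + 2)).val < (w - (a + 2)).val then 1 else 0) + (if (b - (a + 2)).val < (w - (a + 2)).val then 1 else 0) + (if (b + 1 - (a + 2)).val < (w - (a + 2)).val then 1 else 0))) - ((u - (a + 2)).val - ((if (a - (a + 2)).val < (u - (a + 2)).val then 1 else 0) + (if (a + 1 - (a + 2)).val < (u - (a + 2)).val then 1 else 0) + (if (b - (a + 2)).val < (u - (a + 2)).val then 1 else 0) + (if (b + 1 - (a + 2)).val < (u - (a + 2)).val then 1 else 0)))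
        else ((w - (a + 2)).val - ((if (a - (a + 2)).val < (w - (a + 2)).val then 1 else 0) + (if (a + 1 - (a + 2)).val < (w - (a + 2)).val then 1 else 0) + (if (b - (a + 2)).val < (w - (a + 2)).val then 1 else 0) + (if (b + 1 - (a + 2)).val < (w - (a + 2)).val then 1 else 0))) + (2 * n - 4) - ((u - (a + 2)).val - ((if (a - (a + 2)).val < (u - (a + 2)).val then 1 else 0) + (if (a + 1 - (a + 2)).val < (u - (a + 2)).val then 1 else 0) + (if (b - (a + 2)).val < (u - (a + 2)).val then 1 else 0) + (if (b + 1 - (a + 2)).val < (u - (a + 2)).val then 1 else 0))) := by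
      rw [hcast, ZMod.val_natCast, mod_helper (2 * n - 4) _ _ hrwlt hrult]
    rcases le_or_gt ((u - (a + 2)).val - ((if (a - (a + 2)).val < (u - (a + 2)).val then 1 else 0) + (if (a + 1 - (a + 2)).val < (u - (a + 2)).val then 1 else 0) + (if (b - (a + 2)).val < (u - (a + 2)).val then 1 else 0) + (if (b + 1 - (a + 2)).val < (u - (a + 2)).val then 1 else 0))) ((w - (a + 2)).val - ((if (a - (a + 2)).val < (w - (a + 2)).val then 1 else 0) + (if (a + 1 - (a + 2)).val < (w - (a + 2)).val then 1 else 0) + (if (b - (a + 2)).val < (w - (a + 2)).val then 1 else 0) + (if (b + 1 - (a + 2)).val < (w - (a + 2)).val then 1 else 0))) with hc | hc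
    · rw [if_pos hc] at hval'
      omega
    · rw [if_neg (not_le.mpr hc)] at hval'
      omega
    -- strict order transfer
  have fwd : ∀ u v w : ZMod (2 * n), u ∉ ({a, a + 1, b, b + 1} : Set (ZMod (2 * n))) → v ∉ ({a, a + 1, b, b + 1} : Set (ZMod (2 * n))) → w ∉ ({a, a + 1, b, b + 1} : Set (ZMod (2 * n))) →
      u ≠ v → u ≠ w → v ≠ w → (w - u).val < (v - u).val → (φ w - φ u).val < (φ v - φ u).val := by
    intro u v w hu hv hw huv huw hvw hlt
    obtain ⟨hAw, -⟩ := keyA u w hu hw huw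
    obtain ⟨hAv, -⟩ := keyA u v hu hv huv
    have K2 := Kcount2 (a - u).val (a + 1 - u).val (b - u).val (b + 1 - u).val
      (w - u).val (v - u).val
      (vdist _ _ _ dab1) (vdist _ _ _ dab) (vdist _ _ _ dabb1) (vdist _ _ _ da1b)
      (vdist _ _ _ da1b1) (vdist _ _ _ dbb1)
      (vdist _ _ _ (Ne.symm (hnm v hv).1)) (vdist _ _ _ (Ne.symm (hnm v hv).2.1))
      (vdist _ _ _ (Ne.symm (hnm v hv).2.2.1)) (vdist _ _ _ (Ne.symm (hnm v hv).2.2.2)) hlt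
    omega
  have keyB : ∀ u v w : ZMod (2 * n), u ∉ ({a, a + 1, b, b + 1} : Set (ZMod (2 * n))) → v ∉ ({a, a + 1, b, b + 1} : Set (ZMod (2 * n))) → w ∉ ({a, a + 1, b, b + 1} : Set (ZMod (2 * n))) →
      u ≠ v → u ≠ w → v ≠ w → ((w - u).val < (v - u).val ↔ (φ w - φ u).val < (φ v - φ u).val) := by
    intro u v w hu hv hw huv huw hvw
    constructor
    · exact fwd u v w hu hv hw huv huw hvw
    · intro h
      by_contra hnot
      push_neg at hnot
      have hne : (v - u).val ≠ (w - u).val := vdist _ _ _ hvw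
      have hlt' : (v - u).val < (w - u).val := by omega
      have := fwd u w v hu hw hv huw huv (Ne.symm hvw) hlt'
      omega
  -- injectivity of φ off S
  have hφinj : ∀ z1 z2 : ZMod (2 * n), z1 ∉ ({a, a + 1, b, b + 1} : Set (ZMod (2 * n))) → z2 ∉ ({a, a + 1, b, b + 1} : Set (ZMod (2 * n))) → φ z1 = φ z2 → z1 = z2 := by
    intro z1 z2 h1' h2' heq
    by_contra hne
    obtain ⟨-, hpos⟩ := keyA z1 z2 h1' h2' hne
    rw [heq, sub_self] at hpos
    simp [ZMod.val_zero] at hpos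
  -- surjectivity of φ from the complement of S
  have hsurj : ∀ y : ZMod (2 * n - 4), ∃ z, z ∉ ({a, a + 1, b, b + 1} : Set (ZMod (2 * n))) ∧ φ z = y := by
    have hSn : (({a, a + 1, b, b + 1} : Set (ZMod (2 * n)))).ncard = 4 := by
      have : ({a, a + 1, b, b + 1} : Set (ZMod (2 * n))) = ↑({a, a + 1, b, b + 1} : Finset (ZMod (2 * n))) := by simp
      rw [this, Set.ncard_coe_finset]
      rw [show ({a, a + 1, b, b + 1} : Finset (ZMod (2 * n)))
          = insert a (insert (a + 1) (insert b {b + 1})) from rfl]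
      rw [Finset.card_insert_of_notMem (by simp [dab1, dab, dabb1]),
          Finset.card_insert_of_notMem (by simp [da1b, da1b1]),
          Finset.card_insert_of_notMem (by simp [dbb1]), Finset.card_singleton]
    have hcompl : ((({a, a + 1, b, b + 1} : Set (ZMod (2 * n))))ᶜ).ncard = 2 * n - 4 := by
      have h0 : (({a, a + 1, b, b + 1} : Set (ZMod (2 * n)))).ncard + ((({a, a + 1, b, b + 1} : Set (ZMod (2 * n))))ᶜ).ncard = 2 * n := by
        rw [Set.ncard_add_ncard_compl]
        simp [Nat.card_eq_fintype_card]
      omega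
    have hinjOn : Set.InjOn φ ((({a, a + 1, b, b + 1} : Set (ZMod (2 * n))))ᶜ) := by
      intro z1 hz1 z2 hz2 heq
      exact hφinj z1 z2 hz1 hz2 heq
    have himage : φ '' ((({a, a + 1, b, b + 1} : Set (ZMod (2 * n))))ᶜ) = Set.univ := by
      apply Set.eq_of_subset_of_ncard_le (Set.subset_univ _) _ (Set.toFinite _)
      rw [Set.ncard_image_of_injOn hinjOn, hcompl, Set.ncard_univ,
        Nat.card_eq_fintype_card, ZMod.card]
    intro y
    have : y ∈ φ '' ((({a, a + 1, b, b + 1} : Set (ZMod (2 * n))))ᶜ) := by rw [himage]; trivial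
    obtain ⟨z, hz, rfl⟩ := this
    exact ⟨z, hz, rfl⟩
  -- open-arc membership transfer
  have hmem_tr : ∀ u v w : ZMod (2 * n), u ∉ ({a, a + 1, b, b + 1} : Set (ZMod (2 * n))) → v ∉ ({a, a + 1, b, b + 1} : Set (ZMod (2 * n))) → w ∉ ({a, a + 1, b, b + 1} : Set (ZMod (2 * n))) →
      u ≠ v → (w ∈ openArc u v ↔ φ w ∈ openArc (φ u) (φ v)) := by
    intro u v w hu hv hw huv
    by_cases hwu : w = u
    · subst hwu
      simp [openArc, sub_self]
    by_cases hwv : w = v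
    · subst hwv
      simp [openArc]
    simp only [openArc, Set.mem_setOf_eq]
    constructor
    · rintro ⟨-, hlt⟩
      exact ⟨(keyA u w hu hw (Ne.symm hwu)).2,
        (keyB u v w hu hv hw huv (Ne.symm hwu) (fun h => hwv h.symm)).mp hlt⟩
    · rintro ⟨-, hlt⟩
      exact ⟨hvpos w u hwu,
        (keyB u v w hu hv hw huv (Ne.symm hwu) (fun h => hwv h.symm)).mpr hlt⟩
  -- linking transfer
  have hlink_tr : ∀ x y : ZMod (2 * n), x ∉ ({a, a + 1, b, b + 1} : Set (ZMod (2 * n))) → y ∉ ({a, a + 1, b, b + 1} : Set (ZMod (2 * n))) →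
      (Linked f' (φ x) (φ y) ↔ Linked f x y) := by
    intro x y hx hy
    have hfx : f x ∉ ({a, a + 1, b, b + 1} : Set (ZMod (2 * n))) := hfS x hx
    have hfy : f y ∉ ({a, a + 1, b, b + 1} : Set (ZMod (2 * n))) := hfS y hy
    have hxfx : x ≠ f x := fun h => hfpf x h.symm
    unfold Linked
    rw [hf' x hx, hf' y hy]
    by_cases hyx : y = x
    · subst hyx
      simp [openArc, sub_self, Xor', lt_irrefl]
    by_cases hyfx : y = f x
    · subst hyfx
      rw [hinv x]
      simp [openArc, sub_self, Xor', lt_irrefl]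
    have m1 := hmem_tr x (f x) y hx hfx hy hxfx
    have m2 := hmem_tr x (f x) (f y) hx hfx hfy hxfx
    rw [← m1, ← m2]
  -- step lemma for parallel chords
  have hpar : ∀ x : ZMod (2 * n), x ∉ ({a, a + 1, b, b + 1} : Set (ZMod (2 * n))) → (Linked f x a ↔ Linked f x (a + 1)) := by
    intro x hx
    have hfx : f x ∉ ({a, a + 1, b, b + 1} : Set (ZMod (2 * n))) := hfS x hx
    obtain ⟨hxa, hxa1, hxb, hxb1⟩ := hnm x hx
    obtain ⟨hfxa, hfxa1, hfxb, hfxb1⟩ := hnm (f x) hfx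
    have step : ∀ c' : ZMod (2 * n), c' ≠ x → c' + 1 ≠ x → c' ≠ f x → c' + 1 ≠ f x →
        (c' ∈ openArc x (f x) ↔ c' + 1 ∈ openArc x (f x)) := by
      intro c' k1 k2 k3 k4
      have hA : (c' - x).val ≠ 0 := fun h => k1 ((zval_sub_eq_zero_iff _ _).mp h)
      have hA1 : (c' + 1 - x).val ≠ 0 := fun h => k2 ((zval_sub_eq_zero_iff _ _).mp h)
      have hAB : (c' - x).val ≠ (f x - x).val := vdist _ _ _ k3
      have hA1B : (c' + 1 - x).val ≠ (f x - x).val := vdist _ _ _ k4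
      have hstep : (c' + 1 - x).val = if (c' - x).val + 1 = 2 * n then 0 else (c' - x).val + 1 := by
        rw [show c' + 1 - x = (c' - x) + 1 by ring, zadd_one_val]
      have hb1 : (c' - x).val < 2 * n := ZMod.val_lt _
      have hb2 : (f x - x).val < 2 * n := ZMod.val_lt _
      simp only [openArc, Set.mem_setOf_eq]
      rcases eq_or_ne ((c' - x).val + 1) (2 * n) with h | h
      · rw [if_pos h] at hstep
        exact absurd hstep hA1
      · rw [if_neg h] at hstep
        omega
    have s1 := step a (Ne.symm hxa) (Ne.symm hxa1) (Ne.symm hfxa) (Ne.symm hfxa1)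
    have s2 := step b (Ne.symm hxb) (Ne.symm hxb1) (Ne.symm hfxb) (Ne.symm hfxb1)
    unfold Linked
    rw [h1, h2]
    rw [s1, ← s2]
  -- symmetry of linking in the chord
  have hlsym : ∀ x y : ZMod (2 * n), Linked f x (f y) ↔ Linked f x y := by
    intro x y
    unfold Linked
    rw [hinv y]
    exact Iff.of_eq (_root_.xor_comm _ _)
  -- main counting argument
  intro x hx
  have hfx : f x ∉ ({a, a + 1, b, b + 1} : Set (ZMod (2 * n))) := hfS x hx
  set L := {d : Set (ZMod (2 * n)) | ∃ y, d = {y, f y} ∧ Linked f x y} with hL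
  set R := {d : Set (ZMod (2 * n)) | ∃ y, y ∉ ({a, a + 1, b, b + 1} : Set (ZMod (2 * n))) ∧ d = {y, f y} ∧ Linked f x y} with hR
  set E := {d : Set (ZMod (2 * n)) | ∃ y, y ∈ ({a, a + 1, b, b + 1} : Set (ZMod (2 * n))) ∧ d = {y, f y} ∧ Linked f x y} with hE
  have hLRE : L = R ∪ E := by
    ext d
    simp only [hL, hR, hE, Set.mem_union, Set.mem_setOf_eq]
    constructor
    · rintro ⟨y, hdy, hy⟩
      by_cases hyS : y ∈ ({a, a + 1, b, b + 1} : Set (ZMod (2 * n)))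
      · exact Or.inr ⟨y, hyS, hdy, hy⟩
      · exact Or.inl ⟨y, hyS, hdy, hy⟩
    · rintro (⟨y, -, hdy, hy⟩ | ⟨y, -, hdy, hy⟩) <;> exact ⟨y, hdy, hy⟩
  have hdisj : Disjoint R E := by
    rw [Set.disjoint_left]
    rintro d ⟨y, hyS, rfl, -⟩ ⟨z, hzS, hdz, -⟩
    have hzmem : z ∈ ({y, f y} : Set (ZMod (2 * n))) := by rw [hdz]; exact Set.mem_insert _ _
    rcases hzmem with h | h
    · exact hyS (h ▸ hzS)
    · exact hfS y hyS (by rw [Set.mem_singleton_iff] at h; exact h ▸ hzS)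
  have hcount : linkedCount f x = R.ncard + E.ncard := by
    rw [linkedCount, ← hL, hLRE, Set.ncard_union_eq hdisj (Set.toFinite _) (Set.toFinite _)]
  have hcount' : linkedCount f' (φ x) = R.ncard := by
    have himg : {d : Set (ZMod (2 * n - 4)) | ∃ y', d = {y', f' y'} ∧ Linked f' (φ x) y'}
        = (Set.image φ) '' R := by
      ext d
      simp only [Set.mem_setOf_eq, Set.mem_image]
      constructor
      · rintro ⟨y', rfl, hy'⟩
        obtain ⟨z, hz, rfl⟩ := hsurj y'
        refine ⟨{z, f z}, ⟨z, hz, rfl, (hlink_tr x z hx hz).mp hy'⟩, ?_⟩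
        rw [Set.image_pair, hf' z hz]
      · rintro ⟨d0, ⟨z, hz, rfl, hzl⟩, rfl⟩
        refine ⟨φ z, ?_, (hlink_tr x z hx hz).mpr hzl⟩
        rw [Set.image_pair, hf' z hz]
    have hinj2 : Set.InjOn (Set.image φ) R := by
      rintro d1 ⟨y1, hy1, rfl, -⟩ d2 ⟨y2, hy2, rfl, -⟩ himeq
      rw [Set.image_pair, Set.image_pair] at himeq
      have hmem1 : φ y1 ∈ ({φ y2, φ (f y2)} : Set (ZMod (2 * n - 4))) := by
        rw [← himeq]; exact Set.mem_insert _ _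
      have hfy1 : f y1 ∉ ({a, a + 1, b, b + 1} : Set (ZMod (2 * n))) := hfS y1 hy1
      have hfy2 : f y2 ∉ ({a, a + 1, b, b + 1} : Set (ZMod (2 * n))) := hfS y2 hy2
      rcases hmem1 with h | h
      · have := hφinj y1 y2 hy1 hy2 h
        rw [this]
      · rw [Set.mem_singleton_iff] at h
        have h12 : y1 = f y2 := hφinj y1 (f y2) hy1 hfy2 h
        have h21 : f y1 = y2 := by rw [h12]; exact hinv y2
        rw [h12, hinv y2]
        exact Set.pair_comm _ _
    rw [linkedCount, himg, Set.ncard_image_of_injOn hinj2]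
  have heven2 : ∀ m : ℕ, Even (m + 2) ↔ Even m := by
    intro m
    constructor
    · rintro ⟨r, hr⟩; exact ⟨r - 1, by omega⟩
    · rintro ⟨r, hr⟩; exact ⟨r + 1, by omega⟩
  by_cases hLa : Linked f x a
  · have hEeq : E = {({a, b + 1} : Set (ZMod (2 * n))), ({a + 1, b} : Set (ZMod (2 * n)))} := by
      ext d
      simp only [hE, Set.mem_setOf_eq, Set.mem_insert_iff, Set.mem_singleton_iff]
      constructor
      · rintro ⟨z, hzS, rfl, hz⟩
        rcases hzS with h | h | h | h
        · subst h; rw [h1]; exact Or.inl rfl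
        · subst h; rw [h2]; exact Or.inr rfl
        · subst h; rw [hfb]; exact Or.inr (Set.pair_comm _ _)
        · subst h; rw [hfb1]; exact Or.inl (Set.pair_comm _ _)
      · rintro (rfl | rfl)
        · exact ⟨a, Or.inl rfl, by rw [h1], hLa⟩
        · exact ⟨a + 1, Or.inr (Or.inl rfl), by rw [h2], (hpar x hx).mp hLa⟩
    have hEcard : E.ncard = 2 := by
      rw [hEeq]
      apply Set.ncard_pair
      intro hcontra
      have : a ∈ ({a + 1, b} : Set (ZMod (2 * n))) := by
        rw [← hcontra]; exact Set.mem_insert _ _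
      rcases this with h | h
      · exact dab1 h
      · exact dab (Set.mem_singleton_iff.mp h)
    rw [GaussEven, GaussEven, hcount, hcount', hEcard, heven2]
  · have hEeq : E = ∅ := by
      ext d
      simp only [hE, Set.mem_setOf_eq, Set.mem_empty_iff_false, iff_false]
      rintro ⟨z, hzS, rfl, hz⟩
      simp only [Set.mem_insert_iff, Set.mem_singleton_iff] at hzS
      rcases hzS with h | h | h | h
      · subst h; exact hLa hz
      · subst h; exact hLa ((hpar x hx).mpr hz)
      · subst h
        have hz' : Linked f x (f (a + 1)) := by rw [h2]; exact hz
        exact hLa ((hpar x hx).mpr ((hlsym x (a + 1)).mp hz'))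
      · subst h
        have hz' : Linked f x (f a) := by rw [h1]; exact hz
        exact hLa ((hlsym x a).mp hz')
    have hEcard : E.ncard = 0 := by rw [hEeq, Set.ncard_empty]
    rw [GaussEven, GaussEven, hcount, hcount', hEcard, Nat.add_zero]
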